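/- arXiv:2511.05332 — 2 statements merged into one kernel-verified Lean document; each statement's English description precedes it below -/
import Mathlib

section
/- For any natural number n ≥ 1, the sum over σ in S_n of sign(σ)·fix(σ)·x^(fix(σ)-1) equals (x-1)^(n-2)·n·(x+n-2) for all real x (where terms with fix(σ) = 0 contribute 0). -/
open Matrix Finset

private lemma det_form (n : ℕ) (x : ℝ) :
    (∑ σ : Equiv.Perm (Fin n), ((Equiv.Perm.sign σ : ℤ) : ℝ) *
      x ^ ((Finset.univ.filter fun i => σ i = i).card))
    = (Matrix.of fun i j : Fin n => if i = j then x else 1).det := by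
  rw [Matrix.det_apply']
  refine Finset.sum_congr rfl fun σ _ => ?_
  congr 1
  simp only [Matrix.of_apply]
  rw [Finset.prod_ite, Finset.prod_const, Finset.prod_const, one_pow, mul_one]

private lemma det_val (n : ℕ) (hn : 1 ≤ n) (x : ℝ) (hx : x ≠ 1) :
    (Matrix.of fun i j : Fin n => if i = j then x else 1).det
    = (x - 1) ^ (n - 1) * (x + n - 1) := by
  have hx1 : x - 1 ≠ 0 := sub_ne_zero.mpr hx
  have hM : (Matrix.of fun i j : Fin n => if i = j then x else 1)
      = (x - 1) • (1 + Matrix.replicateCol Unit (fun _ => (1:ℝ)) * Matrix.replicateRow Unit (fun _ => (x-1)⁻¹)) := by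
    ext i j
    by_cases h : i = j <;>
      simp [Matrix.mul_apply, Matrix.one_apply, h, mul_add] <;> field_simp <;> ring
  obtain ⟨m, rfl⟩ := Nat.exists_eq_add_of_le hn
  rw [hM, Matrix.det_smul, Matrix.det_one_add_replicateCol_mul_replicateRow]
  have h2 : ((fun _ : Fin (1+m) => (x-1)⁻¹) ⬝ᵥ fun _ => (1:ℝ)) = (1+m : ℕ) * (x-1)⁻¹ := by
    simp [dotProduct]
  rw [h2, Fintype.card_fin]
  have : (1 + m) - 1 = m := by omega
  rw [this, add_comm 1 m, pow_succ]
  push_cast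
  field_simp
  ring

private lemma base (n : ℕ) (hn : 1 ≤ n) :
    (fun x : ℝ => ∑ σ : Equiv.Perm (Fin n), ((Equiv.Perm.sign σ : ℤ) : ℝ) *
      x ^ ((Finset.univ.filter fun i => σ i = i).card))
    = fun x : ℝ => (x - 1) ^ (n - 1) * (x + n - 1) := by
  have hF : Continuous (fun x : ℝ => ∑ σ : Equiv.Perm (Fin n),
      ((Equiv.Perm.sign σ : ℤ) : ℝ) * x ^ ((Finset.univ.filter fun i => σ i = i).card)) := by
    exact continuous_finset_sum _ fun σ _ => continuous_const.mul (continuous_pow _)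
  have hG : Continuous (fun x : ℝ => (x - 1) ^ (n - 1) * (x + n - 1)) := by
    fun_prop
  refine Continuous.ext_on (dense_compl_singleton (1:ℝ)) hF hG fun x hx => ?_
  have hx' : x ≠ 1 := hx
  rw [det_form, det_val n hn x hx']

theorem first_deriv (n : ℕ) (hn : 2 ≤ n) (x : ℝ) :
    (∑ σ : Equiv.Perm (Fin n),
      ((Equiv.Perm.sign σ : ℤ) : ℝ) *
        ((Finset.univ.filter fun i => σ i = i).card : ℝ) *
        x ^ ((Finset.univ.filter fun i => σ i = i).card - 1))
      = (x - 1) ^ (n - 2) * n * (x + n - 2) := by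
  set k : Equiv.Perm (Fin n) → ℕ := fun σ => (Finset.univ.filter fun i => σ i = i).card with hk
  have hF : HasDerivAt (fun y : ℝ => ∑ σ : Equiv.Perm (Fin n),
        ((Equiv.Perm.sign σ : ℤ) : ℝ) * y ^ (k σ))
      (∑ σ : Equiv.Perm (Fin n),
        ((Equiv.Perm.sign σ : ℤ) : ℝ) * ((k σ : ℝ) * x ^ (k σ - 1))) x :=
    HasDerivAt.fun_sum fun σ _ => (hasDerivAt_pow (k σ) x).const_mul _
  have hG : HasDerivAt (fun y : ℝ => (y - 1) ^ (n - 1) * (y + n - 1))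
      (((n-1 : ℕ) : ℝ) * (x - 1) ^ (n - 1 - 1) * 1 * (x + n - 1)
        + (x - 1) ^ (n - 1) * 1) x := by
    exact (((hasDerivAt_id x).sub_const 1).pow (n-1)).mul (((hasDerivAt_id x).add_const (n:ℝ)).sub_const 1)
  have hfun := base n (le_trans one_le_two hn)
  have hderiv : (∑ σ : Equiv.Perm (Fin n),
        ((Equiv.Perm.sign σ : ℤ) : ℝ) * ((k σ : ℝ) * x ^ (k σ - 1)))
      = ((n-1 : ℕ) : ℝ) * (x - 1) ^ (n - 1 - 1) * 1 * (x + n - 1)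
        + (x - 1) ^ (n - 1) * 1 := by
    rw [← hF.deriv, ← hG.deriv]
    exact congrFun (congrArg deriv hfun) x
  calc (∑ σ : Equiv.Perm (Fin n),
      ((Equiv.Perm.sign σ : ℤ) : ℝ) * (k σ : ℝ) * x ^ (k σ - 1))
      = ∑ σ : Equiv.Perm (Fin n),
        ((Equiv.Perm.sign σ : ℤ) : ℝ) * ((k σ : ℝ) * x ^ (k σ - 1)) := by
        refine Finset.sum_congr rfl fun σ _ => by ring
    _ = ((n-1 : ℕ) : ℝ) * (x - 1) ^ (n - 1 - 1) * 1 * (x + n - 1)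
        + (x - 1) ^ (n - 1) * 1 := hderiv
    _ = (x - 1) ^ (n - 2) * n * (x + n - 2) := by
        obtain ⟨m, rfl⟩ := Nat.exists_eq_add_of_le hn
        simp only [show 2+m-1 = m+1 from by omega, show m+1-1 = m from by omega,
          show 2+m-1-1 = m from by omega, show 2+m-2 = m from by omega, pow_succ]
        push_cast
        ring
end

section
/- For any natural numbers n ≥ 1, k ≥ 1 and real x, Σ_{σ ∈ S_n} sign(σ)·(fix(σ))!/(fix(σ)+k)!·x^(fix(σ)+k) equals the k-fold iterated integral from 0 of the polynomial (u-1+n)(u-1)^(n-1), evaluated at x. -/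
open Matrix Finset

lemma det_M (m : ℕ) (x : ℝ) (hx : x ≠ 1) :
    (Matrix.det (Matrix.of fun i j : Fin (m+1) => if i = j then x else (1:ℝ)))
      = (x - 1 + (m+1)) * (x - 1) ^ m := by
  have hx1 : x - 1 ≠ 0 := sub_ne_zero.mpr hx
  have hM : (Matrix.of fun i j : Fin (m+1) => if i = j then x else (1:ℝ)) =
      (((x - 1) • (1 + replicateCol (Fin 1) (fun _ : Fin (m+1) => (x-1)⁻¹) *
          replicateRow (Fin 1) (fun _ : Fin (m+1) => (1:ℝ)))) :
        Matrix (Fin (m+1)) (Fin (m+1)) ℝ) := by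
    ext i j
    simp only [Matrix.smul_apply, Matrix.add_apply, Matrix.one_apply,
      Matrix.mul_apply, Matrix.replicateCol_apply, Matrix.replicateRow_apply, Matrix.of_apply, Fin.sum_univ_one,
      smul_eq_mul, mul_one]
    by_cases h : i = j <;> simp [h, hx1] <;> field_simp <;> ring
  rw [hM, Matrix.det_smul]
  erw [Matrix.det_one_add_replicateCol_mul_replicateRow (ι := Fin 1)]
  simp only [dotProduct, Fintype.card_fin, smul_eq_mul, one_mul, Finset.sum_const,
    Finset.card_univ, nsmul_eq_mul]
  field_simp
  push_cast
  ring

lemma base_sum (n : ℕ) (hn : 1 ≤ n) (x : ℝ) :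
    (∑ σ : Equiv.Perm (Fin n), ((Equiv.Perm.sign σ : ℤ) : ℝ) *
        x ^ (Finset.univ.filter fun i => σ i = i).card)
      = (x - 1 + n) * (x - 1) ^ (n - 1) := by
  obtain ⟨m, rfl⟩ : ∃ m, n = m + 1 := ⟨n - 1, (Nat.succ_pred_eq_of_pos hn).symm⟩
  have heq : ∀ x : ℝ, (∑ σ : Equiv.Perm (Fin (m+1)), ((Equiv.Perm.sign σ : ℤ) : ℝ) *
        x ^ (Finset.univ.filter fun i => σ i = i).card)
      = Matrix.det (Matrix.of fun i j : Fin (m+1) => if i = j then x else (1:ℝ)) := by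
    intro x
    rw [Matrix.det_apply']
    refine Finset.sum_congr rfl fun σ _ => ?_
    have h1 : (∏ i : Fin (m+1), (if σ i = i then x else 1)) =
        x ^ (Finset.univ.filter fun i => σ i = i).card := by
      rw [Finset.prod_ite, Finset.prod_const, Finset.prod_const, one_pow, mul_one]
    simp only [Matrix.of_apply, h1, Units.smul_def, zsmul_eq_mul]
  have hcont1 : Continuous fun x : ℝ => (∑ σ : Equiv.Perm (Fin (m+1)),
      ((Equiv.Perm.sign σ : ℤ) : ℝ) * x ^ (Finset.univ.filter fun i => σ i = i).card) :=
    continuous_finset_sum _ fun σ _ => (continuous_const.mul (continuous_pow _))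
  have hcont2 : Continuous fun x : ℝ => (x - 1 + ((m:ℝ)+1)) * (x - 1) ^ m := by
    continuity
  have key := Continuous.ext_on (dense_compl_singleton (1:ℝ)) hcont1 hcont2 ?_
  · have := congrFun key x
    rw [this]
    push_cast
    norm_num
  · intro y hy
    simp only [Set.mem_compl_iff, Set.mem_singleton_iff] at hy
    dsimp only
    rw [heq y, det_M m y hy]

noncomputable def Pint (n : ℕ) : ℕ → ℝ → ℝ
  | 0 => fun u => (u - 1 + n) * (u - 1) ^ (n - 1)
  | (j + 1) => fun x => ∫ u in (0:ℝ)..x, Pint n j u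

lemma term_integral (c : ℝ) (m : ℕ) (x : ℝ) :
    ∫ u in (0:ℝ)..x, c * u ^ m = c * x ^ (m+1) / (m+1) := by
  rw [intervalIntegral.integral_const_mul, integral_pow]
  push_cast
  ring

theorem iterated_integral_identity (n k : ℕ) (hn : 1 ≤ n) (hk : 1 ≤ k) (x : ℝ) :
    (∑ σ : Equiv.Perm (Fin n),
      ((Equiv.Perm.sign σ : ℤ) : ℝ) *
        ((Finset.univ.filter fun i => σ i = i).card.factorial : ℝ) /
        (((Finset.univ.filter fun i => σ i = i).card + k).factorial : ℝ) *
        x ^ ((Finset.univ.filter fun i => σ i = i).card + k))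
      = Pint n k x := by
  clear hk
  induction k generalizing x with
  | zero =>
    simp only [Nat.add_zero, pow_zero, Pint]
    rw [← base_sum n hn x]
    refine Finset.sum_congr rfl fun σ _ => ?_
    rw [mul_div_assoc, div_self (Nat.cast_ne_zero.mpr (Nat.factorial_ne_zero _)), mul_one]
  | succ k ih =>
    have hint : ∀ σ : Equiv.Perm (Fin n), IntervalIntegrable
        (fun u => ((Equiv.Perm.sign σ : ℤ) : ℝ) *
          ((Finset.univ.filter fun i => σ i = i).card.factorial : ℝ) /
          (((Finset.univ.filter fun i => σ i = i).card + k).factorial : ℝ) *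
          u ^ ((Finset.univ.filter fun i => σ i = i).card + k))
        MeasureTheory.volume 0 x :=
      fun σ => (Continuous.intervalIntegrable (by continuity) 0 x)
    show _ = ∫ u in (0:ℝ)..x, Pint n k u
    have : ∀ u : ℝ, Pint n k u = (∑ σ : Equiv.Perm (Fin n),
        ((Equiv.Perm.sign σ : ℤ) : ℝ) *
          ((Finset.univ.filter fun i => σ i = i).card.factorial : ℝ) /
          (((Finset.univ.filter fun i => σ i = i).card + k).factorial : ℝ) *
          u ^ ((Finset.univ.filter fun i => σ i = i).card + k)) := fun u => (ih u).symm
    rw [intervalIntegral.integral_congr (g := fun u => ∑ σ : Equiv.Perm (Fin n),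
        ((Equiv.Perm.sign σ : ℤ) : ℝ) *
          ((Finset.univ.filter fun i => σ i = i).card.factorial : ℝ) /
          (((Finset.univ.filter fun i => σ i = i).card + k).factorial : ℝ) *
          u ^ ((Finset.univ.filter fun i => σ i = i).card + k)) (fun u _ => this u),
      intervalIntegral.integral_finset_sum (fun σ _ => hint σ)]
    refine Finset.sum_congr rfl fun σ _ => ?_
    rw [term_integral]
    set m := (Finset.univ.filter fun i => σ i = i).card
    have : m + (k + 1) = (m + k) + 1 := by ring
    rw [this, pow_succ]
    rw [Nat.factorial_succ]
    push_cast
    have hfac : ((m + k).factorial : ℝ) ≠ 0 := Nat.cast_ne_zero.mpr (Nat.factorial_ne_zero _)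
    have hmk : ((m:ℝ) + k + 1) ≠ 0 := by positivity
    field_simp
end
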